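/- Let A = S¹ × [0,1] be the annulus, where S¹ is the unit circle in the complex plane, and let f : A → A be the homeomorphism defined by f(e^{2πix}, y) = (e^{2πi(x+y)}, y) for all (x,y) ∈ ℝ × [0,1]. Then f is n-sensitive for every integer n ≥ 2, but f is not ω-sensitive. -/

import Mathlib

/-- The ω-limit set of a point `x` under a map `f`. -/
def omegaLimitSet {X : Type*} [TopologicalSpace X] (f : X → X) (x : X) : Set X :=
  {y | ∃ φ : ℕ → ℕ, StrictMono φ ∧ (∀ i, 0 < φ i) ∧
    Filter.Tendsto (fun i => f^[φ i] x) Filter.atTop (nhds y)}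

/-- The distance between two sets: `d(A,B) = inf {d(a,b) : a ∈ A, b ∈ B}`. -/
noncomputable def setDist {X : Type*} [MetricSpace X] (A B : Set X) : ℝ :=
  sInf (Set.image2 dist A B)

/-- `f` is `(ω,n)`-sensitive. -/
def OmegaNSensitive {X : Type*} [MetricSpace X] (f : X → X) (n : ℕ) : Prop :=
  ∃ s > (0 : ℝ), ∀ x : X, ∀ U ∈ nhds x, ∃ y : Fin n → X,
    (∀ i, y i ∈ U) ∧
    ∀ i j, i ≠ j → s < setDist (omegaLimitSet f (y i)) (omegaLimitSet f (y j))

/-- `f` is `n`-sensitive. -/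
def NSensitive {X : Type*} [MetricSpace X] (f : X → X) (n : ℕ) : Prop :=
  ∃ s > (0 : ℝ), ∀ x : X, ∀ U ∈ nhds x, ∃ y : Fin n → X, ∃ k : ℕ,
    (∀ i, y i ∈ U) ∧
    ∀ i j, i ≠ j → s < dist (f^[k] (y i)) (f^[k] (y j))

/-- The annulus `A = S¹ × [0,1]`, where `S¹ ⊆ ℂ` is the unit circle. -/
abbrev Annulus : Type := ↥(Metric.sphere (0 : ℂ) 1) × ↥(Set.Icc (0 : ℝ) 1)

/-- The annulus homeomorphism `f(e^{2πix}, y) = (e^{2πi(x+y)}, y)`,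
i.e. `f(z, y) = (z ⬝ e^{2πiy}, y)`. -/
noncomputable def annulusMap (w : Annulus) : Annulus :=
  (⟨(w.1 : ℂ) * Complex.exp (2 * Real.pi * (w.2 : ℝ) * Complex.I), by
      have h1 : ‖(w.1 : ℂ)‖ = 1 := mem_sphere_zero_iff_norm.1 w.1.2
      rw [mem_sphere_zero_iff_norm, norm_mul, h1, one_mul,
        Complex.norm_exp]
      norm_num⟩,
    w.2)

section Aux

open Complex Filter Real

private lemma norm_exp_mul_I_sub_one (θ : ℝ) :
    ‖Complex.exp (θ * Complex.I) - 1‖ = 2 * |Real.sin (θ / 2)| := by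
  rw [Complex.norm_def, Complex.normSq_apply]
  have hre : (Complex.exp (θ * Complex.I) - 1).re = Real.cos θ - 1 := by
    simp [Complex.exp_ofReal_mul_I_re]
  have him : (Complex.exp (θ * Complex.I) - 1).im = Real.sin θ := by
    simp [Complex.exp_ofReal_mul_I_im]
  rw [hre, him]
  have key : (Real.cos θ - 1) * (Real.cos θ - 1) + Real.sin θ * Real.sin θ
      = (2 * |Real.sin (θ / 2)|) ^ 2 := by
    have h1 := Real.sin_sq_add_cos_sq (θ / 2)
    have h2 : Real.cos θ = 2 * Real.cos (θ / 2) ^ 2 - 1 := by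
      rw [show θ = 2 * (θ / 2) by ring, Real.cos_two_mul]; ring_nf
    have h3 := Real.sin_sq_add_cos_sq θ
    have h4 : |Real.sin (θ / 2)| ^ 2 = Real.sin (θ / 2) ^ 2 := sq_abs _
    nlinarith
  rw [key, Real.sqrt_sq (by positivity)]

private lemma norm_exp_rot (x : ℝ) : ‖Complex.exp ((x : ℂ) * Complex.I)‖ = 1 := by
  rw [Complex.norm_exp_ofReal_mul_I]

private lemma annulusMap_snd (w : Annulus) : (annulusMap w).2 = w.2 := rfl

private lemma annulus_iter_snd (k : ℕ) (w : Annulus) : (annulusMap^[k] w).2 = w.2 := by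
  induction k with
  | zero => rfl
  | succ k ih => rw [Function.iterate_succ_apply', annulusMap_snd, ih]

private lemma annulus_iter_fst (k : ℕ) (w : Annulus) :
    ((annulusMap^[k] w).1 : ℂ)
      = (w.1 : ℂ) * Complex.exp (2 * Real.pi * k * (w.2 : ℝ) * Complex.I) := by
  induction k with
  | zero => simp
  | succ k ih =>
    rw [Function.iterate_succ_apply']
    show ((annulusMap^[k] w).1 : ℂ)
        * Complex.exp (2 * Real.pi * ((annulusMap^[k] w).2 : ℝ) * Complex.I) = _
    rw [ih, annulus_iter_snd, mul_assoc, ← Complex.exp_add]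
    congr 1
    push_cast
    ring_nf

private lemma exists_small_rot (t : ℝ) {ε : ℝ} (hε : 0 < ε) :
    ∃ m : ℕ, 1 ≤ m ∧ ‖Complex.exp (2 * Real.pi * m * t * Complex.I) - 1‖ < ε := by
  set u : ℕ → ℂ := fun k => Complex.exp (2 * Real.pi * k * t * Complex.I) with hu
  have hmem : ∀ k, u k ∈ Metric.sphere (0 : ℂ) 1 := by
    intro k
    rw [mem_sphere_zero_iff_norm]
    have : ((2 * Real.pi * k * t : ℝ) : ℂ) * Complex.I = 2 * Real.pi * k * t * Complex.I := by
      push_cast; ring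
    rw [hu]
    simp only
    rw [← this, Complex.norm_exp_ofReal_mul_I]
  obtain ⟨c, -, φ, hφ, hlim⟩ :=
    (isCompact_sphere (0 : ℂ) 1).tendsto_subseq hmem
  rw [Metric.tendsto_atTop] at hlim
  obtain ⟨N, hN⟩ := hlim (ε / 2) (by positivity)
  refine ⟨φ (N + 1) - φ N, ?_, ?_⟩
  · have := hφ (Nat.lt_succ_self N)
    simp only [Nat.succ_eq_add_one] at this
    omega
  · have h1 := hN N le_rfl
    have h2 := hN (N + 1) (Nat.le_succ N)
    have hsub : u (φ (N + 1)) - u (φ N)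
        = u (φ N) * (Complex.exp (2 * Real.pi * ((φ (N + 1) - φ N : ℕ) : ℝ)
            * t * Complex.I) - 1) := by
      rw [mul_sub, mul_one, hu]
      simp only
      rw [← Complex.exp_add]
      congr 1
      have : ((φ (N + 1) - φ N : ℕ) : ℝ) = (φ (N + 1) : ℝ) - φ N := by
        have := (hφ (Nat.lt_succ_self N)).le
        push_cast [Nat.cast_sub this]
        ring
      push_cast [this]
      ring_nf
    have hnorm : ‖u (φ (N + 1)) - u (φ N)‖
        = ‖Complex.exp (2 * Real.pi * ((φ (N + 1) - φ N : ℕ) : ℝ) * t * Complex.I) - 1‖ := by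
      rw [hsub, norm_mul, mem_sphere_zero_iff_norm.1 (hmem (φ N)), one_mul]
    have hlt : ‖u (φ (N + 1)) - u (φ N)‖ < ε := by
      calc ‖u (φ (N + 1)) - u (φ N)‖ ≤ dist (u (φ (N + 1))) c + dist c (u (φ N)) := by
            rw [← dist_eq_norm]; exact dist_triangle _ _ _
        _ < ε / 2 + ε / 2 := by
            rw [dist_comm c]
            exact add_lt_add (h2 : dist ((u ∘ φ) (N + 1)) c < ε / 2)
              (h1 : dist ((u ∘ φ) N) c < ε / 2)
        _ = ε := by ring
    rw [hnorm] at hlt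
    exact_mod_cast hlt

private lemma norm_exp_nat_mul_sub_one (a : ℂ) (ha : ‖Complex.exp a‖ = 1) (l : ℕ) :
    ‖Complex.exp (l * a) - 1‖ ≤ l * ‖Complex.exp a - 1‖ := by
  induction l with
  | zero => simp
  | succ l ih =>
    have hsplit : Complex.exp ((l + 1 : ℕ) * a) - 1
        = Complex.exp (l * a) * (Complex.exp a - 1) + (Complex.exp (l * a) - 1) := by
      rw [mul_sub, mul_one, ← Complex.exp_add]
      push_cast
      ring_nf
    rw [hsplit]
    calc ‖_ + _‖ ≤ ‖Complex.exp (l * a) * (Complex.exp a - 1)‖ + ‖Complex.exp (l * a) - 1‖ :=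
          norm_add_le _ _
      _ ≤ 1 * ‖Complex.exp a - 1‖ + l * ‖Complex.exp a - 1‖ := by
          rw [norm_mul]
          gcongr
          · rw [Complex.exp_nat_mul, norm_pow, ha, one_pow]
      _ = (l + 1 : ℕ) * ‖Complex.exp a - 1‖ := by push_cast; ring

private lemma exists_large_small_rot (t : ℝ) {ε : ℝ} (hε : 0 < ε) (M : ℕ) :
    ∃ m : ℕ, M < m ∧ ‖Complex.exp (2 * Real.pi * m * t * Complex.I) - 1‖ < ε := by
  obtain ⟨m₀, hm₀, hsmall⟩ := exists_small_rot t (show (0 : ℝ) < ε / (M + 1) by positivity)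
  refine ⟨(M + 1) * m₀, ?_, ?_⟩
  · calc M < M + 1 := Nat.lt_succ_self M
      _ ≤ (M + 1) * m₀ := Nat.le_mul_of_pos_right _ hm₀
  · set a : ℂ := 2 * Real.pi * m₀ * t * Complex.I with hadef
    have ha : ‖Complex.exp a‖ = 1 := by
      have : a = ((2 * Real.pi * m₀ * t : ℝ) : ℂ) * Complex.I := by push_cast [hadef]; ring
      rw [this, norm_exp_rot]
    have harg : 2 * (Real.pi : ℂ) * (((M + 1) * m₀ : ℕ) : ℂ) * t * Complex.I
        = ((M + 1 : ℕ) : ℂ) * a := by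
      push_cast [hadef]; ring
    rw [show (2 : ℂ) * Real.pi * (((M + 1) * m₀ : ℕ) : ℂ) * t * Complex.I
        = ((M + 1 : ℕ) : ℂ) * a from harg]
    calc ‖Complex.exp (((M + 1 : ℕ) : ℂ) * a) - 1‖ ≤ (M + 1 : ℕ) * ‖Complex.exp a - 1‖ :=
          norm_exp_nat_mul_sub_one a ha (M + 1)
      _ < (M + 1 : ℕ) * (ε / (M + 1)) := by
          apply mul_lt_mul_of_pos_left hsmall
          positivity
      _ = ε := by push_cast; field_simp

private lemma dist_iter_self (m : ℕ) (y : Annulus) :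
    dist (annulusMap^[m] y) y
      = ‖Complex.exp (2 * Real.pi * m * ((y.2 : ℝ)) * Complex.I) - 1‖ := by
  rw [Prod.dist_eq]
  have h2 : dist (annulusMap^[m] y).2 y.2 = 0 := by rw [annulus_iter_snd]; simp
  have h1 : dist (annulusMap^[m] y).1 y.1
      = ‖Complex.exp (2 * Real.pi * m * ((y.2 : ℝ)) * Complex.I) - 1‖ := by
    rw [Subtype.dist_eq, dist_eq_norm, annulus_iter_fst]
    rw [show (y.1 : ℂ) * Complex.exp (2 * Real.pi * m * ((y.2 : ℝ)) * Complex.I) - y.1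
        = (y.1 : ℂ) * (Complex.exp (2 * Real.pi * m * ((y.2 : ℝ)) * Complex.I) - 1) by ring]
    rw [norm_mul, mem_sphere_zero_iff_norm.1 y.1.2, one_mul]
  rw [h1, h2]
  exact max_eq_left (norm_nonneg _)

private lemma mem_omega_self (y : Annulus) : y ∈ omegaLimitSet annulusMap y := by
  set t : ℝ := (y.2 : ℝ) with ht
  have key : ∀ i M : ℕ, ∃ m : ℕ, M < m ∧
      ‖Complex.exp (2 * Real.pi * m * t * Complex.I) - 1‖ < 1 / ((i : ℝ) + 1) :=
    fun i M => exists_large_small_rot t (by positivity) M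
  choose F h1 h2 using key
  refine ⟨fun i => Nat.rec (F 0 0) (fun i prev => F (i + 1) prev) i, ?_, ?_, ?_⟩
  · exact strictMono_nat_of_lt_succ fun i => h1 (i + 1) _
  · intro i
    have h0 : 0 < F 0 0 := h1 0 0
    induction i with
    | zero => exact h0
    | succ i ih => exact lt_trans ih (h1 (i + 1) _)
  · rw [tendsto_iff_dist_tendsto_zero]
    apply squeeze_zero (fun i => dist_nonneg) (g := fun i : ℕ => 1 / ((i : ℝ) + 1))
    · intro i
      rw [dist_iter_self]
      cases i with
      | zero => exact (h2 0 0).le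
      | succ i => exact (h2 (i + 1) _).le
    · exact tendsto_one_div_add_atTop_nhds_zero_nat

private lemma sin_ge_sin (n : ℕ) (hn : 2 ≤ n) (a : ℝ) (h1 : π / n ≤ a)
    (h2 : a ≤ π - π / n) : Real.sin (π / n) ≤ Real.sin a := by
  have hn' : (2 : ℝ) ≤ n := by exact_mod_cast hn
  have hπn : 0 < π / n := by positivity
  have hπn2 : π / n ≤ π / 2 := by
    apply div_le_div_of_nonneg_left pi_pos.le (by norm_num) hn'
  rcases le_or_gt a (π / 2) with h | h
  · exact Real.strictMonoOn_sin.monotoneOn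
      ⟨by linarith, hπn2⟩ ⟨by linarith, h⟩ h1
  · rw [← Real.sin_pi_sub a]
    exact Real.strictMonoOn_sin.monotoneOn
      ⟨by linarith, hπn2⟩ ⟨by linarith, by linarith⟩ (by linarith)

private lemma rot_sep (n : ℕ) (hn : 2 ≤ n) (r : ℝ) (h1 : 1 ≤ |r|) (h2 : |r| ≤ (n : ℝ) - 1) :
    Real.sin (π / n) < ‖Complex.exp (((2 * π * r / n : ℝ) : ℂ) * Complex.I) - 1‖ := by
  have hn' : (2 : ℝ) ≤ n := by exact_mod_cast hn
  have hnpos : (0 : ℝ) < n := by linarith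
  rw [norm_exp_mul_I_sub_one]
  have habs : |Real.sin (2 * π * r / n / 2)| = |Real.sin (π * |r| / n)| := by
    rcases abs_cases r with ⟨hr, _⟩ | ⟨hr, _⟩
    · rw [hr]; ring_nf
    · rw [hr]
      rw [show π * -r / n = -(2 * π * r / n / 2) by ring, Real.sin_neg, abs_neg]
  have hbound : Real.sin (π / n) ≤ Real.sin (π * |r| / n) := by
    apply sin_ge_sin n hn
    · rw [div_le_div_iff₀ hnpos hnpos]
      nlinarith [mul_nonneg (mul_pos Real.pi_pos hnpos).le (sub_nonneg.2 h1)]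
    · rw [show π - π / n = π * ((n : ℝ) - 1) / n by field_simp]
      gcongr
  have hpos : 0 < Real.sin (π / n) := by
    apply Real.sin_pos_of_pos_of_lt_pi (by positivity)
    rw [div_lt_iff₀ hnpos]
    nlinarith [pi_pos]
  rw [habs, abs_of_pos (lt_of_lt_of_le hpos hbound)]
  linarith

private lemma setDist_le_dist {A B : Set Annulus} {a b : Annulus}
    (ha : a ∈ A) (hb : b ∈ B) : setDist A B ≤ dist a b := by
  apply csInf_le
  · refine ⟨0, fun r hr => ?_⟩
    obtain ⟨u, -, v, -, rfl⟩ := hr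
    exact dist_nonneg
  · exact Set.mem_image2_of_mem ha hb

end Aux

theorem stmt14 :
    (∀ n : ℕ, 2 ≤ n → NSensitive annulusMap n) ∧ ¬ OmegaNSensitive annulusMap 2 := by
  constructor
  · -- n-sensitivity
    intro n hn
    have hn' : (2 : ℝ) ≤ n := by exact_mod_cast hn
    have hnpos : (0 : ℝ) < n := by linarith
    have hsin : 0 < Real.sin (Real.pi / n) := by
      apply Real.sin_pos_of_pos_of_lt_pi (by positivity)
      rw [div_lt_iff₀ hnpos]
      nlinarith [Real.pi_pos]
    refine ⟨Real.sin (Real.pi / n), hsin, ?_⟩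
    intro x U hU
    obtain ⟨ε, hε, hball⟩ := Metric.mem_nhds_iff.1 hU
    set M : ℕ := ⌈1 / ε⌉₊ + 2 with hM
    have hMpos : (0 : ℝ) < M := by positivity
    have hM2 : (2 : ℝ) ≤ M := by
      have h : (2 : ℕ) ≤ M := by omega
      exact_mod_cast h
    have hMε : 1 / (M : ℝ) < ε := by
      rw [div_lt_iff₀ hMpos]
      have hc1 : (1 : ℝ) / ε ≤ ⌈1 / ε⌉₊ := Nat.le_ceil _
      have hc2 : ((⌈1 / ε⌉₊ : ℕ) : ℝ) < M := by
        rw [hM]; push_cast; linarith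
      calc (1 : ℝ) = ε * (1 / ε) := by field_simp
        _ ≤ ε * ⌈1 / ε⌉₊ := by gcongr
        _ < ε * M := by gcongr
    set t : ℝ := (x.2 : ℝ) with ht
    have htIcc : t ∈ Set.Icc (0 : ℝ) 1 := x.2.2
    set σ : ℝ := if t ≤ 1 / 2 then 1 else -1 with hσ
    have habsσ : |σ| = 1 := by rw [hσ]; split_ifs <;> norm_num
    set δ : ℝ := 1 / ((n : ℝ) * M) with hδ
    have hδpos : 0 < δ := by positivity
    have hstep : ∀ i : Fin n, 0 ≤ (i : ℕ) * δ ∧ ((i : ℕ) : ℝ) * δ < 1 / (M : ℝ) := by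
      intro i
      refine ⟨by positivity, ?_⟩
      have hi : ((i : ℕ) : ℝ) ≤ (n : ℝ) - 1 := by
        have hlt : (i : ℕ) + 1 ≤ n := i.2
        have := (Nat.cast_le (α := ℝ)).2 hlt
        push_cast at this; linarith
      calc ((i : ℕ) : ℝ) * δ ≤ ((n : ℝ) - 1) * δ := by gcongr
        _ = ((n : ℝ) - 1) / ((n : ℝ) * M) := by rw [hδ]; ring
        _ < (n : ℝ) / ((n : ℝ) * M) := by gcongr; linarith
        _ = 1 / (M : ℝ) := by field_simp
    have hmem : ∀ i : Fin n, t + σ * (i : ℕ) * δ ∈ Set.Icc (0 : ℝ) 1 := by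
      intro i
      obtain ⟨hs0, hs1⟩ := hstep i
      have hhalf : ((i : ℕ) : ℝ) * δ ≤ 1 / 2 := by
        have h12 : 1 / (M : ℝ) ≤ 1 / 2 := by
          rw [div_le_div_iff₀ hMpos (by norm_num)]; linarith
        linarith
      obtain ⟨ht0, ht1⟩ := htIcc
      rw [hσ]
      split_ifs with hcase
      · constructor <;> nlinarith
      · constructor <;> nlinarith
    set y : Fin n → Annulus := fun i => (x.1, ⟨t + σ * (i : ℕ) * δ, hmem i⟩) with hy
    refine ⟨y, M, ?_, ?_⟩
    · intro i
      apply hball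
      rw [Metric.mem_ball, Prod.dist_eq]
      have hfst : dist (y i).1 x.1 = 0 := by simp [hy]
      have hsnd : dist (y i).2 x.2 < ε := by
        rw [Subtype.dist_eq, Real.dist_eq]
        show |t + σ * (i : ℕ) * δ - t| < ε
        rw [show t + σ * ((i : ℕ) : ℝ) * δ - t = σ * (((i : ℕ) : ℝ) * δ) by ring,
          abs_mul, habsσ, one_mul, abs_of_nonneg (hstep i).1]
        exact lt_trans (hstep i).2 hMε
      rw [hfst]
      exact max_lt hε hsnd
    · intro i j hij
      set r : ℝ := σ * (((i : ℕ) : ℝ) - ((j : ℕ) : ℝ)) with hr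
      have hijval : (i : ℕ) ≠ (j : ℕ) := fun h => hij (Fin.ext h)
      have habsr : |r| = |((i : ℕ) : ℝ) - ((j : ℕ) : ℝ)| := by
        rw [hr, abs_mul, habsσ, one_mul]
      have hrbounds : 1 ≤ |r| ∧ |r| ≤ (n : ℝ) - 1 := by
        rw [habsr]
        rcases lt_or_gt_of_ne hijval with h | h
        · have hle : ((i : ℕ) : ℝ) + 1 ≤ (j : ℕ) := by exact_mod_cast Nat.succ_le_of_lt h
          have hjn : ((j : ℕ) : ℝ) ≤ (n : ℝ) - 1 := by
            have := (Nat.cast_le (α := ℝ)).2 j.2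
            push_cast at this; linarith
          have hi0 : (0 : ℝ) ≤ (i : ℕ) := Nat.cast_nonneg _
          rw [abs_sub_comm, abs_of_nonneg (by linarith)]
          constructor <;> linarith
        · have hle : ((j : ℕ) : ℝ) + 1 ≤ (i : ℕ) := by exact_mod_cast Nat.succ_le_of_lt h
          have hin : ((i : ℕ) : ℝ) ≤ (n : ℝ) - 1 := by
            have := (Nat.cast_le (α := ℝ)).2 i.2
            push_cast at this; linarith
          have hj0 : (0 : ℝ) ≤ (j : ℕ) := Nat.cast_nonneg _
          rw [abs_of_nonneg (by linarith)]
          constructor <;> linarith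
      set a : ℝ := 2 * Real.pi * M * (t + σ * (i : ℕ) * δ) with ha
      set b : ℝ := 2 * Real.pi * M * (t + σ * (j : ℕ) * δ) with hb
      have hMne : (M : ℝ) ≠ 0 := by positivity
      have hnne : (n : ℝ) ≠ 0 := by positivity
      have hsub : a - b = 2 * Real.pi * r / n := by
        rw [ha, hb, hr, hδ]
        field_simp
        ring
      have hz : ‖(x.1 : ℂ)‖ = 1 := mem_sphere_zero_iff_norm.1 x.1.2
      have keynorm : ‖((annulusMap^[M] (y i)).1 : ℂ) - ((annulusMap^[M] (y j)).1 : ℂ)‖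
          = ‖Complex.exp (((2 * Real.pi * r / n : ℝ) : ℂ) * Complex.I) - 1‖ := by
        rw [annulus_iter_fst, annulus_iter_fst]
        have harg : ∀ k : Fin n, (2 : ℂ) * Real.pi * M * (((y k).2 : ℝ) : ℂ) * Complex.I
            = ((2 * Real.pi * M * (t + σ * (k : ℕ) * δ) : ℝ) : ℂ) * Complex.I := by
          intro k
          simp only [hy]
          push_cast
          ring
        rw [harg i, harg j]
        have hfac : ((y i).1 : ℂ) * Complex.exp ((a : ℂ) * Complex.I)
              - ((y j).1 : ℂ) * Complex.exp ((b : ℂ) * Complex.I)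
            = ((x.1 : ℂ) * Complex.exp ((b : ℂ) * Complex.I))
              * (Complex.exp (((a - b : ℝ) : ℂ) * Complex.I) - 1) := by
          have hyi : ((y i).1 : ℂ) = (x.1 : ℂ) := by simp [hy]
          have hyj : ((y j).1 : ℂ) = (x.1 : ℂ) := by simp [hy]
          rw [hyi, hyj, mul_sub, mul_one, mul_assoc, ← Complex.exp_add,
            show ((b : ℂ)) * Complex.I + ((a - b : ℝ) : ℂ) * Complex.I
              = (a : ℂ) * Complex.I by push_cast; ring]
        rw [show ((2 * Real.pi * M * (t + σ * (i : ℕ) * δ) : ℝ) : ℂ) = ((a : ℝ) : ℂ) by rw [ha],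
          show ((2 * Real.pi * M * (t + σ * (j : ℕ) * δ) : ℝ) : ℂ) = ((b : ℝ) : ℂ) by rw [hb],
          hfac, norm_mul, norm_mul, hz, one_mul, norm_exp_rot, one_mul, hsub]
      calc Real.sin (Real.pi / n)
          < ‖Complex.exp (((2 * Real.pi * r / n : ℝ) : ℂ) * Complex.I) - 1‖ :=
            rot_sep n hn r hrbounds.1 hrbounds.2
        _ = ‖((annulusMap^[M] (y i)).1 : ℂ) - ((annulusMap^[M] (y j)).1 : ℂ)‖ := keynorm.symm
        _ = dist ((annulusMap^[M] (y i)).1) ((annulusMap^[M] (y j)).1) := by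
            rw [Subtype.dist_eq, dist_eq_norm]
        _ ≤ dist (annulusMap^[M] (y i)) (annulusMap^[M] (y j)) := by
            rw [Prod.dist_eq]; exact le_max_left _ _
  · -- not ω-sensitive
    rintro ⟨s, hs, H⟩
    set x : Annulus := (⟨1, by simp⟩, ⟨0, by norm_num⟩) with hx
    obtain ⟨y, hyU, hsep⟩ := H x (Metric.ball x (s / 2)) (Metric.ball_mem_nhds x (by positivity))
    have h01 := hsep 0 1 (by decide)
    have hle : setDist (omegaLimitSet annulusMap (y 0)) (omegaLimitSet annulusMap (y 1))
        ≤ dist (y 0) (y 1) := setDist_le_dist (mem_omega_self (y 0)) (mem_omega_self (y 1))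
    have d0 : dist (y 0) x < s / 2 := Metric.mem_ball.1 (hyU 0)
    have d1 : dist (y 1) x < s / 2 := Metric.mem_ball.1 (hyU 1)
    have htri : dist (y 0) (y 1) ≤ dist (y 0) x + dist x (y 1) := dist_triangle _ _ _
    rw [dist_comm x (y 1)] at htri
    linarith
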